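/- arXiv:2001.11179 — 2 statements merged into one kernel-verified Lean document; each statement's English description precedes it below -/
import Mathlib

section
/- Let L be the matrix-valued Laplacian of a matrix-weighted graph on n nodes with symmetric positive semidefinite edge weights A_ij. Suppose the graph has a positive spanning tree, i.e., the simple graph on the n nodes whose edges are exactly those pairs (i,j) with A_ij positive definite is connected. Then null(L) = R, and consequently for every initial state x(0) ∈ ℝ^{dn} the solution x(t) = exp(−tL) x(0) converges as t → ∞ to the average consensus value x_f = 1_n ⊗ ((1/n) Σ_{i=1}^n x_i(0)). -/
open Matrix Finset Filter

/-- The matrix-valued Laplacian of a matrix-weighted graph on `n` nodes with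
state dimension `d`: the `(i,j)` off-diagonal block is `-A i j` and the `i`-th
diagonal block is `∑ k ≠ i, A i k`. -/
noncomputable def mwLaplacian {n d : ℕ} (A : Fin n → Fin n → Matrix (Fin d) (Fin d) ℝ) :
    Matrix (Fin n × Fin d) (Fin n × Fin d) ℝ :=
  fun p q =>
    if p.1 = q.1 then ∑ k ∈ Finset.univ.erase p.1, A p.1 k p.2 q.2
    else -(A p.1 q.1 p.2 q.2)

/-- Membership in the consensus subspace `R = range (1ₙ ⊗ I_d)`:
all blocks of `x` are equal. -/
def isConsensus {n d : ℕ} (x : Fin n × Fin d → ℝ) : Prop :=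
  ∃ v : Fin d → ℝ, ∀ p : Fin n × Fin d, x p = v p.2

/-- The Euclidean norm on `ι → ℝ`. -/
noncomputable def euclNorm {ι : Type*} [Fintype ι] (x : ι → ℝ) : ℝ :=
  Real.sqrt (x ⬝ᵥ x)

lemma mwL_mulVec {n d : ℕ} (A : Fin n → Fin n → Matrix (Fin d) (Fin d) ℝ)
    (hdiag : ∀ i, A i i = 0) (x : Fin n × Fin d → ℝ) (i : Fin n) (p : Fin d) :
    (mwLaplacian A).mulVec x (i, p) = ∑ k, ∑ q, A i k p q * (x (i, q) - x (k, q)) := by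
  have h1 : (mwLaplacian A).mulVec x (i, p)
      = ∑ k : Fin n, ∑ q : Fin d, (if i = k then ∑ j ∈ Finset.univ.erase i, A i j p q
          else -(A i k p q)) * x (k, q) := by
    simp [Matrix.mulVec, dotProduct, mwLaplacian, Fintype.sum_prod_type]
  have off : ∀ k ∈ Finset.univ.erase i,
      (∑ q : Fin d, (if i = k then ∑ j ∈ Finset.univ.erase i, A i j p q
          else -(A i k p q)) * x (k, q)) = ∑ q : Fin d, -(A i k p q * x (k, q)) := by
    intro k hk
    refine Finset.sum_congr rfl fun q _ => ?_
    rw [if_neg (Finset.ne_of_mem_erase hk).symm, neg_mul]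
  rw [h1, ← Finset.add_sum_erase (a := i) _ _ (Finset.mem_univ i),
    Finset.sum_congr rfl off]
  simp only [eq_self_iff_true, if_true]
  have hrhs : ∀ k : Fin n, (∑ q : Fin d, A i k p q * (x (i, q) - x (k, q)))
      = (∑ q : Fin d, A i k p q * x (i, q)) - ∑ q : Fin d, A i k p q * x (k, q) := by
    intro k; simp [mul_sub, Finset.sum_sub_distrib]
  simp_rw [hrhs]
  rw [Finset.sum_sub_distrib]
  have e1 : (∑ k : Fin n, ∑ q : Fin d, A i k p q * x (i, q))
      = ∑ q : Fin d, (∑ j ∈ Finset.univ.erase i, A i j p q) * x (i, q) := by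
    rw [← Finset.sum_erase (a := i) univ (by simp [hdiag])]
    rw [Finset.sum_comm]
    refine Finset.sum_congr rfl fun q _ => ?_
    rw [Finset.sum_mul]
  have e2 : (∑ k : Fin n, ∑ q : Fin d, A i k p q * x (k, q))
      = ∑ k ∈ Finset.univ.erase i, ∑ q : Fin d, A i k p q * x (k, q) := by
    rw [Finset.sum_erase (a := i) univ (by simp [hdiag])]
  rw [e1, e2]
  simp [Finset.sum_neg_distrib, sub_eq_add_neg]

lemma consensus_mulVec_zero {n d : ℕ} (A : Fin n → Fin n → Matrix (Fin d) (Fin d) ℝ)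
    (hdiag : ∀ i, A i i = 0) (v : Fin d → ℝ) :
    (mwLaplacian A).mulVec (fun p => v p.2) = 0 := by
  funext p
  obtain ⟨i, q⟩ := p
  rw [mwL_mulVec A hdiag _ i q]
  simp

lemma mwL_quad {n d : ℕ} (A : Fin n → Fin n → Matrix (Fin d) (Fin d) ℝ)
    (hdiag : ∀ i, A i i = 0) (hsym : ∀ i j, A i j = A j i) (x : Fin n × Fin d → ℝ) :
    x ⬝ᵥ (mwLaplacian A).mulVec x
      = (1/2) * ∑ i : Fin n, ∑ k : Fin n,
          (fun q => x (i, q) - x (k, q)) ⬝ᵥ (A i k).mulVec (fun q => x (i, q) - x (k, q)) := by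
  have key : ∀ F : Fin n → Fin n → ℝ,
      (∑ i : Fin n, ∑ k : Fin n, F i k) = ∑ i : Fin n, ∑ k : Fin n, F k i :=
    fun F => Finset.sum_comm
  have step1 : x ⬝ᵥ (mwLaplacian A).mulVec x
      = ∑ i : Fin n, ∑ k : Fin n, ∑ p : Fin d, ∑ q : Fin d,
          x (i, p) * (A i k p q * (x (i, q) - x (k, q))) := by
    rw [dotProduct, Fintype.sum_prod_type]
    refine Finset.sum_congr rfl fun i _ => ?_
    simp_rw [mwL_mulVec A hdiag x i, Finset.mul_sum]
    exact Finset.sum_comm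
  have step2 : (∑ i : Fin n, ∑ k : Fin n,
        (fun q => x (i, q) - x (k, q)) ⬝ᵥ (A i k).mulVec (fun q => x (i, q) - x (k, q)))
      = ∑ i : Fin n, ∑ k : Fin n, ∑ p : Fin d, ∑ q : Fin d,
          (x (i, p) - x (k, p)) * (A i k p q * (x (i, q) - x (k, q))) := by
    refine Finset.sum_congr rfl fun i _ => Finset.sum_congr rfl fun k _ => ?_
    simp [dotProduct, Matrix.mulVec, Finset.mul_sum]
  have swap : (∑ i : Fin n, ∑ k : Fin n, ∑ p : Fin d, ∑ q : Fin d,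
        x (k, p) * (A i k p q * (x (i, q) - x (k, q))))
      = - ∑ i : Fin n, ∑ k : Fin n, ∑ p : Fin d, ∑ q : Fin d,
          x (i, p) * (A i k p q * (x (i, q) - x (k, q))) := by
    rw [key (fun i k => ∑ p : Fin d, ∑ q : Fin d,
      x (k, p) * (A i k p q * (x (i, q) - x (k, q))))]
    rw [← Finset.sum_neg_distrib]
    refine Finset.sum_congr rfl fun i _ => ?_
    rw [← Finset.sum_neg_distrib]
    refine Finset.sum_congr rfl fun k _ => ?_
    rw [hsym k i, ← Finset.sum_neg_distrib]
    refine Finset.sum_congr rfl fun p _ => ?_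
    rw [← Finset.sum_neg_distrib]
    refine Finset.sum_congr rfl fun q _ => ?_
    ring
  rw [step1, step2]
  have expand : (∑ i : Fin n, ∑ k : Fin n, ∑ p : Fin d, ∑ q : Fin d,
        (x (i, p) - x (k, p)) * (A i k p q * (x (i, q) - x (k, q))))
      = (∑ i : Fin n, ∑ k : Fin n, ∑ p : Fin d, ∑ q : Fin d,
          x (i, p) * (A i k p q * (x (i, q) - x (k, q))))
        - ∑ i : Fin n, ∑ k : Fin n, ∑ p : Fin d, ∑ q : Fin d,
            x (k, p) * (A i k p q * (x (i, q) - x (k, q))) := by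
    simp_rw [← Finset.sum_sub_distrib]
    refine Finset.sum_congr rfl fun i _ => Finset.sum_congr rfl fun k _ =>
      Finset.sum_congr rfl fun p _ => Finset.sum_congr rfl fun q _ => ?_
    ring
  rw [expand, swap]
  ring

lemma mwL_isHermitian {n d : ℕ} (A : Fin n → Fin n → Matrix (Fin d) (Fin d) ℝ)
    (hpsd : ∀ i j, (A i j).PosSemidef) (hsym : ∀ i j, A i j = A j i) :
    (mwLaplacian A).IsHermitian := by
  have hAsym : ∀ i j a b, A i j a b = A i j b a := by
    intro i j a b
    have h := congr_fun (congr_fun (hpsd i j).1 a) b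
    simpa [Matrix.conjTranspose_apply] using h.symm
  ext p q
  simp only [Matrix.conjTranspose_apply, mwLaplacian, star_trivial]
  by_cases h : q.1 = p.1
  · rw [if_pos h, if_pos h.symm, h]
    exact Finset.sum_congr rfl fun j _ => hAsym _ _ _ _
  · rw [if_neg h, if_neg (fun hh => h hh.symm)]
    rw [hsym q.1 p.1, hAsym]

lemma mwL_posSemidef {n d : ℕ} (A : Fin n → Fin n → Matrix (Fin d) (Fin d) ℝ)
    (hpsd : ∀ i j, (A i j).PosSemidef) (hsym : ∀ i j, A i j = A j i)
    (hdiag : ∀ i, A i i = 0) : (mwLaplacian A).PosSemidef := by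
  refine posSemidef_iff_dotProduct_mulVec.mpr ⟨mwL_isHermitian A hpsd hsym, fun x => ?_⟩
  rw [star_trivial, mwL_quad A hdiag hsym x]
  have : ∀ i ∈ (univ : Finset (Fin n)), 0 ≤ ∑ k : Fin n,
      (fun q => x (i, q) - x (k, q)) ⬝ᵥ (A i k).mulVec (fun q => x (i, q) - x (k, q)) := by
    intro i _
    refine Finset.sum_nonneg fun k _ => ?_
    simpa [star_trivial] using (hpsd i k).dotProduct_mulVec_nonneg (fun q => x (i, q) - x (k, q))
  have h0 := Finset.sum_nonneg this
  linarith

lemma mwL_kernel {n d : ℕ} (hn : 2 ≤ n)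
    (A : Fin n → Fin n → Matrix (Fin d) (Fin d) ℝ)
    (hpsd : ∀ i j, (A i j).PosSemidef)
    (hsym : ∀ i j, A i j = A j i)
    (hdiag : ∀ i, A i i = 0)
    (htree : (SimpleGraph.fromRel (fun i j : Fin n => (A i j).PosDef)).Connected)
    (x : Fin n × Fin d → ℝ) :
    (mwLaplacian A).mulVec x = 0 ↔ isConsensus x := by
  constructor
  · intro hx
    have hq : x ⬝ᵥ (mwLaplacian A).mulVec x = 0 := by rw [hx]; simp
    rw [mwL_quad A hdiag hsym x] at hq
    have hsum0 : (∑ i : Fin n, ∑ k : Fin n,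
        (fun q => x (i, q) - x (k, q)) ⬝ᵥ (A i k).mulVec (fun q => x (i, q) - x (k, q))) = 0 := by
      linarith
    have hnn : ∀ i k : Fin n, 0 ≤
        (fun q => x (i, q) - x (k, q)) ⬝ᵥ (A i k).mulVec (fun q => x (i, q) - x (k, q)) := by
      intro i k
      simpa [star_trivial] using (hpsd i k).dotProduct_mulVec_nonneg (fun q => x (i, q) - x (k, q))
    have hterm : ∀ i k : Fin n,
        (fun q => x (i, q) - x (k, q)) ⬝ᵥ (A i k).mulVec (fun q => x (i, q) - x (k, q)) = 0 := by
      intro i k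
      have h1 := (Finset.sum_eq_zero_iff_of_nonneg
        (fun i _ => Finset.sum_nonneg fun k _ => hnn i k)).mp hsum0 i (Finset.mem_univ i)
      exact (Finset.sum_eq_zero_iff_of_nonneg (fun k _ => hnn i k)).mp h1 k (Finset.mem_univ k)
    have hedge : ∀ i k : Fin n, (A i k).PosDef → ∀ q, x (i, q) = x (k, q) := by
      intro i k hpd q
      by_contra hne
      have hy : (fun q => x (i, q) - x (k, q)) ≠ 0 := by
        intro h0
        exact hne (sub_eq_zero.mp (congrFun h0 q))
      have hlt := hpd.dotProduct_mulVec_pos hy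
      rw [star_trivial, hterm i k] at hlt
      exact lt_irrefl _ hlt
    have hreach : ∀ i k : Fin n,
        (SimpleGraph.fromRel (fun i j : Fin n => (A i j).PosDef)).Reachable i k →
          ∀ q, x (i, q) = x (k, q) := by
      intro i k h
      obtain ⟨w⟩ := h
      induction w with
      | nil => intro q; rfl
      | cons h w ih =>
        rename_i a b c
        intro q
        rw [SimpleGraph.fromRel_adj] at h
        have hab : ∀ q, x (a, q) = x (b, q) := by
          rcases h.2 with h' | h'
          · exact hedge a b h'
          · exact fun q => (hedge b a ((hsym a b) ▸ h') q).symm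
        rw [hab q]; exact ih q
    refine ⟨fun q => x (⟨0, by omega⟩, q), fun p => ?_⟩
    exact (hreach _ _ (htree.preconnected _ _) p.2).symm
  · rintro ⟨v, hv⟩
    have : x = fun p => v p.2 := funext hv
    rw [this]
    exact consensus_mulVec_zero A hdiag v

lemma psd_exp_tendsto {N : Type*} [Fintype N] [DecidableEq N] (L : Matrix N N ℝ)
    (hL : L.PosSemidef) (x0 c : N → ℝ) (hc : L.mulVec c = 0)
    (horth : ∀ y : N → ℝ, L.mulVec y = 0 → y ⬝ᵥ (x0 - c) = 0) :
    Tendsto (fun t : ℝ => (NormedSpace.exp (-(t • L))).mulVec x0) atTop (nhds c) := by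
  classical
  have hH : L.IsHermitian := hL.1
  set U : Matrix N N ℝ := (hH.eigenvectorUnitary : Matrix N N ℝ) with hU
  set lam : N → ℝ := hH.eigenvalues with hlamdef
  have hnn : ∀ k, 0 ≤ lam k := fun k => hL.eigenvalues_nonneg k
  have hUU : star U * U = 1 := Matrix.mem_unitaryGroup_iff'.mp (hH.eigenvectorUnitary).2
  have hUU' : U * star U = 1 := Matrix.mem_unitaryGroup_iff.mp (hH.eigenvectorUnitary).2
  have hUinv : U⁻¹ = star U := Matrix.inv_eq_left_inv hUU
  have hUnit : IsUnit U := by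
    have : Invertible U := ⟨star U, hUU, hUU'⟩
    exact isUnit_of_invertible U
  have hspec : L = U * Matrix.diagonal lam * star U := by
    have h := hH.spectral_theorem
    rwa [RCLike.ofReal_real_eq_id, Function.id_comp] at h
  set ind : N → ℝ := fun k => if lam k = 0 then 1 else 0 with hind
  set P : Matrix N N ℝ := U * Matrix.diagonal ind * star U with hP
  have key2 : ∀ D1 D2 : Matrix N N ℝ,
      (U * D1 * star U) * (U * D2 * star U) = U * (D1 * D2) * star U := by
    intro D1 D2
    calc (U * D1 * star U) * (U * D2 * star U)
        = U * D1 * (star U * U) * (D2 * star U) := by simp only [Matrix.mul_assoc]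
      _ = U * (D1 * D2) * star U := by rw [hUU, Matrix.mul_one]; simp only [Matrix.mul_assoc]
  have hexp : ∀ t : ℝ, NormedSpace.exp (-(t • L))
      = U * Matrix.diagonal (fun k => Real.exp (-(t * lam k))) * star U := by
    intro t
    have hD : Matrix.diagonal (fun k => -(t * lam k)) = -(t • Matrix.diagonal lam) := by
      ext a b
      by_cases h : a = b <;> simp [Matrix.diagonal_apply, h]
    have h1 : -(t • L) = U * Matrix.diagonal (fun k => -(t * lam k)) * U⁻¹ := by
      rw [hUinv, hspec, hD]
      simp only [Matrix.mul_neg, Matrix.neg_mul, Matrix.mul_smul, Matrix.smul_mul]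
    rw [h1, Matrix.exp_conj U _ hUnit, Matrix.exp_diagonal, hUinv]
    congr 2
    funext k
    rw [Pi.exp_def]
    rw [← Real.exp_eq_exp_ℝ]
  have hentry : ∀ p q : N,
      Tendsto (fun t : ℝ => NormedSpace.exp (-(t • L)) p q) atTop (nhds (P p q)) := by
    intro p q
    have hPpq : P p q = ∑ k, U p k * ind k * star U k q := by
      simp [hP, Matrix.mul_apply, Matrix.diagonal_apply, Matrix.star_apply, mul_ite, ite_mul,
        mul_zero, zero_mul, Finset.sum_ite_eq, Finset.sum_ite_eq']
    have hEpq : ∀ t : ℝ, NormedSpace.exp (-(t • L)) p q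
        = ∑ k, U p k * Real.exp (-(t * lam k)) * star U k q := by
      intro t
      rw [hexp t]
      simp [Matrix.mul_apply, Matrix.diagonal_apply, Matrix.star_apply, mul_ite, ite_mul,
        mul_zero, zero_mul, Finset.sum_ite_eq, Finset.sum_ite_eq']
    simp only [hEpq, hPpq]
    refine tendsto_finset_sum _ fun k _ => ?_
    by_cases h : lam k = 0
    · simp only [hind, h, if_pos rfl, mul_zero, neg_zero, Real.exp_zero]
      exact tendsto_const_nhds
    · have hpos : 0 < lam k := lt_of_le_of_ne (hnn k) (Ne.symm h)
      have h3 : Tendsto (fun t : ℝ => t * lam k) atTop atTop :=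
        tendsto_id.atTop_mul_const hpos
      have h2 : Tendsto (fun t : ℝ => Real.exp (-(t * lam k))) atTop (nhds 0) :=
        Real.tendsto_exp_atBot.comp (tendsto_neg_atBot_iff.mpr h3)
      have := (tendsto_const_nhds (x := U p k) (f := atTop)).mul h2
      have h4 := this.mul (tendsto_const_nhds (x := star U k q) (f := atTop))
      simp only [hind, h, if_neg h, mul_zero, zero_mul] at h4 ⊢
      exact h4
  have hmv : Tendsto (fun t : ℝ => (NormedSpace.exp (-(t • L))).mulVec x0) atTop
      (nhds (P.mulVec x0)) := by
    rw [tendsto_pi_nhds]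
    intro p
    simp only [Matrix.mulVec, dotProduct]
    exact tendsto_finset_sum _ fun q _ => (hentry p q).mul tendsto_const_nhds
  -- now identify P *ᵥ x0 with c
  have hLP : L * P = 0 := by
    rw [hspec, hP, key2, Matrix.diagonal_mul_diagonal]
    have : (fun k => lam k * ind k) = fun _ => (0 : ℝ) := by
      funext k
      by_cases h : lam k = 0 <;> simp [hind, h]
    rw [this]
    simp
  have hPP : P * P = P := by
    rw [hP, key2, Matrix.diagonal_mul_diagonal]
    have : (fun k => ind k * ind k) = ind := by
      funext k
      by_cases h : lam k = 0 <;> simp [hind, h]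
    rw [this]
  have hPH : star P = P := by
    rw [hP]
    rw [Matrix.star_mul, Matrix.star_mul, star_star]
    have : star (Matrix.diagonal ind) = Matrix.diagonal ind := by
      rw [Matrix.star_eq_conjTranspose, Matrix.diagonal_conjTranspose]
      simp
    rw [this]
    simp only [Matrix.mul_assoc]
  have hPT : Pᵀ = P := by
    have := hPH
    rwa [Matrix.star_eq_conjTranspose, Matrix.conjTranspose_eq_transpose_of_trivial] at this
  set w : N → ℝ := x0 - c with hw
  have hPw : P.mulVec w = 0 := by
    have h1 : L.mulVec (P.mulVec w) = 0 := by
      rw [Matrix.mulVec_mulVec, hLP, Matrix.zero_mulVec]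
    have h2 : (P.mulVec w) ⬝ᵥ w = 0 := horth _ h1
    have h3 : (P.mulVec w) ⬝ᵥ (P.mulVec w) = 0 := by
      rw [Matrix.dotProduct_mulVec]
      have hvm : (P.mulVec w) ᵥ* P = P.mulVec (P.mulVec w) := by
        rw [← Matrix.mulVec_transpose, hPT]
      rw [hvm, Matrix.mulVec_mulVec, hPP, h2]
    exact dotProduct_self_eq_zero.mp h3
  have hPc : P.mulVec c = c := by
    have h4 : Matrix.diagonal lam *ᵥ (star U *ᵥ c) = 0 := by
      have hcomm : Matrix.diagonal lam * star U = star U * L := by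
        rw [hspec]
        calc Matrix.diagonal lam * star U
            = (star U * U) * (Matrix.diagonal lam * star U) := by rw [hUU, Matrix.one_mul]
          _ = star U * (U * Matrix.diagonal lam * star U) := by simp only [Matrix.mul_assoc]
      rw [Matrix.mulVec_mulVec, hcomm, ← Matrix.mulVec_mulVec, hc, Matrix.mulVec_zero]
    have h5 : Matrix.diagonal ind *ᵥ (star U *ᵥ c) = star U *ᵥ c := by
      funext k
      have hk := congrFun h4 k
      rw [Matrix.mulVec_diagonal] at hk
      rw [Matrix.mulVec_diagonal]
      by_cases h : lam k = 0
      · simp [hind, h]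
      · have h0 : (star U *ᵥ c) k = 0 := by
          rcases mul_eq_zero.mp hk with h' | h'
          · exact absurd h' h
          · exact h'
        simp [hind, h, h0]
    rw [hP, ← Matrix.mulVec_mulVec, ← Matrix.mulVec_mulVec, h5, Matrix.mulVec_mulVec, hUU',
      Matrix.one_mulVec]
  have hx0 : x0 = c + w := by rw [hw]; ring
  have hfinal : P.mulVec x0 = c := by
    rw [hx0, Matrix.mulVec_add, hPc, hPw, add_zero]
  rwa [hfinal] at hmv

/-- If a matrix-weighted graph with symmetric positive semidefinite
edge weights has a positive spanning tree (the simple graph of positive-definite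
edges is connected), then `null(L) = R` and the consensus flow converges to the
average consensus value from every initial state. -/
theorem positive_spanning_tree_average_consensus {n d : ℕ} (hn : 2 ≤ n) (hd : 1 ≤ d)
    (A : Fin n → Fin n → Matrix (Fin d) (Fin d) ℝ)
    (hpsd : ∀ i j, (A i j).PosSemidef)
    (hsym : ∀ i j, A i j = A j i)
    (hdiag : ∀ i, A i i = 0)
    (htree : (SimpleGraph.fromRel (fun i j : Fin n => (A i j).PosDef)).Connected) :
    (∀ x : Fin n × Fin d → ℝ, (mwLaplacian A).mulVec x = 0 ↔ isConsensus x) ∧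
      ∀ x0 : Fin n × Fin d → ℝ,
        Tendsto (fun t : ℝ => (NormedSpace.exp (-(t • mwLaplacian A))).mulVec x0)
          atTop (nhds (fun p => (n : ℝ)⁻¹ * ∑ i : Fin n, x0 (i, p.2))) := by
  have hker := fun x => mwL_kernel hn A hpsd hsym hdiag htree x
  refine ⟨hker, fun x0 => ?_⟩
  have hnz : (n : ℝ) ≠ 0 := by
    have : 0 < n := by omega
    exact_mod_cast this.ne'
  set c : Fin n × Fin d → ℝ := fun p => (n : ℝ)⁻¹ * ∑ i : Fin n, x0 (i, p.2) with hc
  have hcc : isConsensus c := ⟨fun q => (n : ℝ)⁻¹ * ∑ i : Fin n, x0 (i, q), fun p => rfl⟩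
  have hLc : (mwLaplacian A).mulVec c = 0 := (hker c).mpr hcc
  have horth : ∀ y : Fin n × Fin d → ℝ,
      (mwLaplacian A).mulVec y = 0 → y ⬝ᵥ (x0 - c) = 0 := by
    intro y hy
    obtain ⟨v, hv⟩ := (hker y).mp hy
    rw [dotProduct, Fintype.sum_prod_type_right]
    refine Finset.sum_eq_zero fun p _ => ?_
    have hterm : ∀ i : Fin n, y (i, p) * (x0 - c) (i, p)
        = v p * (x0 (i, p) - (n : ℝ)⁻¹ * ∑ j : Fin n, x0 (j, p)) := by
      intro i
      rw [hv (i, p), Pi.sub_apply, hc]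
    simp only [hterm]
    rw [← Finset.mul_sum, Finset.sum_sub_distrib, Finset.sum_const, Finset.card_univ,
      Fintype.card_fin, nsmul_eq_mul, ← mul_assoc, mul_inv_cancel₀ hnz, one_mul, sub_self,
      mul_zero]
  exact psd_exp_tendsto (mwLaplacian A) (mwL_posSemidef A hpsd hsym hdiag) x0 c hLc horth
end

section
/- Consider a periodic switched matrix-weighted network on n nodes: let A^0, …, A^{m−1} be the matrix-weighted adjacency data of m graphs on the same n nodes (each edge weight A^k_ij ∈ ℝ^{d×d} symmetric positive semidefinite, A^k_ij = A^k_ji, A^k_ii = 0), with corresponding matrix-valued Laplacians L^0, …, L^{m−1} and dwell times Δt_0, …, Δt_{m−1} > 0, extended periodically by L^k = L^{k mod m}, Δt_k = Δt_{k mod m}. If the integral graph over one period has a positive spanning tree — i.e., the simple graph on the n nodes whose edges are the pairs (i,j) with Σ_{k=0}^{m−1} Δt_k A^k_ij positive definite is connected — then for every initial state x_0 ∈ ℝ^{dn}, the sequence defined by x_{k+1} = exp(−Δt_k L^k) x_k converges to the average consensus value x_f = 1_n ⊗ ((1/n) Σ_{i=1}^n (x_0)_i). -/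
open Matrix Finset Filter
open NormedSpace

/-- The state of the switched system at switching instants:
`x_0 = x0`, `x_{k+1} = E k ⬝ x_k`. -/
noncomputable def stateSeq {ι : Type*} [Fintype ι] [DecidableEq ι]
    (E : ℕ → Matrix ι ι ℝ) (x0 : ι → ℝ) : ℕ → ι → ℝ
  | 0 => x0
  | k + 1 => (E k).mulVec (stateSeq E x0 k)

section NormLemmas
variable {ι : Type*} [Fintype ι]

lemma dot_self_nonneg (x : ι → ℝ) : 0 ≤ x ⬝ᵥ x :=
  Finset.sum_nonneg fun i _ => mul_self_nonneg _

lemma euclNorm_nonneg (x : ι → ℝ) : 0 ≤ euclNorm x := Real.sqrt_nonneg _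

lemma euclNorm_zero : euclNorm (0 : ι → ℝ) = 0 := by
  simp [euclNorm]

lemma euclNorm_eq_zero_iff {x : ι → ℝ} : euclNorm x = 0 ↔ x = 0 := by
  constructor
  · intro h
    have h2 : x ⬝ᵥ x = 0 := by
      have := Real.sqrt_eq_zero (dot_self_nonneg x) |>.mp h
      exact this
    funext i
    have hn : ∀ j ∈ Finset.univ, 0 ≤ x j * x j := fun j _ => mul_self_nonneg _
    have := (Finset.sum_eq_zero_iff_of_nonneg hn).mp h2 i (Finset.mem_univ i)
    exact mul_self_eq_zero.mp this
  · rintro rfl; exact euclNorm_zero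

lemma euclNorm_smul (a : ℝ) (x : ι → ℝ) : euclNorm (a • x) = |a| * euclNorm x := by
  unfold euclNorm
  have : (a • x) ⬝ᵥ (a • x) = a ^ 2 * (x ⬝ᵥ x) := by
    simp [dotProduct, Finset.mul_sum]
    congr 1; funext i; ring
  rw [this, Real.sqrt_mul (sq_nonneg a), Real.sqrt_sq_eq_abs]

lemma euclNorm_le_of_dot_le {x y : ι → ℝ} (h : x ⬝ᵥ x ≤ y ⬝ᵥ y) : euclNorm x ≤ euclNorm y :=
  Real.sqrt_le_sqrt h

lemma euclNorm_lt_of_dot_lt {x y : ι → ℝ} (h : x ⬝ᵥ x < y ⬝ᵥ y) : euclNorm x < euclNorm y :=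
  (Real.sqrt_lt_sqrt (dot_self_nonneg x)) h

lemma abs_apply_le_euclNorm (x : ι → ℝ) (p : ι) : |x p| ≤ euclNorm x := by
  have h1 : |x p| = Real.sqrt (x p * x p) := by
    rw [← abs_mul_abs_self (x p), Real.sqrt_mul_self (abs_nonneg _)]
  rw [h1]
  apply Real.sqrt_le_sqrt
  exact Finset.single_le_sum (fun j _ => mul_self_nonneg (x j)) (Finset.mem_univ p)

end NormLemmas


section ExpLemmas

attribute [local instance] Matrix.linftyOpNormedRing Matrix.linftyOpNormedAlgebra

variable {ι : Type*} [Fintype ι] [DecidableEq ι]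

/-- entry-wise derivative of `s ↦ exp (s • M)`. -/
lemma hasDerivAt_exp_entry (M : Matrix ι ι ℝ) (t : ℝ) (p q : ι) :
    HasDerivAt (fun s : ℝ => exp (s • M) p q) ((exp (t • M) * M) p q) t := by
  have h := hasDerivAt_exp_smul_const (𝕂 := ℝ) M t
  let L : Matrix ι ι ℝ →ₗ[ℝ] ℝ :=
    { toFun := fun N => N p q, map_add' := fun _ _ => rfl, map_smul' := fun _ _ => rfl }
  exact ((LinearMap.toContinuousLinearMap L).hasFDerivAt.comp_hasDerivAt t h)

/-- derivative of the coordinates of `s ↦ exp (s • M) *ᵥ y`. -/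
lemma hasDerivAt_exp_mulVec (M : Matrix ι ι ℝ) (y : ι → ℝ) (t : ℝ) (p : ι) :
    HasDerivAt (fun s : ℝ => (exp (s • M) *ᵥ y) p) (((exp (t • M) * M) *ᵥ y) p) t := by
  simp only [mulVec, dotProduct]
  exact HasDerivAt.fun_sum fun q _ => (hasDerivAt_exp_entry M t p q).mul_const (y q)

/-- derivative of `s ↦ ⟨exp(s•M) y, exp(s•M) y⟩`. -/
lemma hasDerivAt_exp_qform (M : Matrix ι ι ℝ) (y : ι → ℝ) (t : ℝ) :
    HasDerivAt (fun s : ℝ => (exp (s • M) *ᵥ y) ⬝ᵥ (exp (s • M) *ᵥ y))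
      (2 * (((exp (t • M) * M) *ᵥ y) ⬝ᵥ (exp (t • M) *ᵥ y))) t := by
  have h : HasDerivAt (fun s : ℝ => (exp (s • M) *ᵥ y) ⬝ᵥ (exp (s • M) *ᵥ y))
      (∑ p : ι, (((exp (t • M) * M) *ᵥ y) p * (exp (t • M) *ᵥ y) p
        + (exp (t • M) *ᵥ y) p * ((exp (t • M) * M) *ᵥ y) p)) t := by
    simp only [dotProduct]
    exact HasDerivAt.fun_sum fun p _ =>
      (hasDerivAt_exp_mulVec M y t p).mul (hasDerivAt_exp_mulVec M y t p)
  convert h using 1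
  simp only [dotProduct, Finset.mul_sum]
  congr 1; funext p; ring

end ExpLemmas

section ExpLemmas2

attribute [local instance] Matrix.linftyOpNormedRing Matrix.linftyOpNormedAlgebra

variable {ι : Type*} [Fintype ι] [DecidableEq ι]

/-- If `M y = 0` then `exp M y = y`. -/
lemma exp_mulVec_of_kernel {M : Matrix ι ι ℝ} {y : ι → ℝ} (h : M *ᵥ y = 0) :
    exp M *ᵥ y = y := by
  funext p
  have hdiff : ∀ t : ℝ, HasDerivAt (fun s : ℝ => (exp (s • M) *ᵥ y) p) 0 t := by
    intro t
    have h1 := hasDerivAt_exp_mulVec M y t p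
    have h2 : ((exp (t • M) * M) *ᵥ y) p = 0 := by
      rw [← Matrix.mulVec_mulVec, h, Matrix.mulVec_zero]; rfl
    rwa [h2] at h1
  have hconst := is_const_of_deriv_eq_zero (f := fun s : ℝ => (exp (s • M) *ᵥ y) p)
    (fun t => (hdiff t).differentiableAt) (fun t => (hdiff t).deriv) 1 0
  simpa [NormedSpace.exp_zero, Matrix.one_mulVec] using hconst

/-- Nonexpansiveness of `exp (-(t • L))` for `L` PSD, `t ≥ 0`, in the quadratic form. -/
lemma exp_contract_dot_le {L : Matrix ι ι ℝ} (hL : L.PosSemidef) {t : ℝ} (ht : 0 ≤ t)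
    (y : ι → ℝ) :
    (exp (-(t • L)) *ᵥ y) ⬝ᵥ (exp (-(t • L)) *ᵥ y) ≤ y ⬝ᵥ y := by
  set g : ℝ → ℝ := fun s => (exp (s • (-L)) *ᵥ y) ⬝ᵥ (exp (s • (-L)) *ᵥ y) with hg
  have hderiv : ∀ s : ℝ, HasDerivAt g
      (-(2 * ((L *ᵥ (exp (s • (-L)) *ᵥ y)) ⬝ᵥ (exp (s • (-L)) *ᵥ y)))) s := by
    intro s
    have h1 := hasDerivAt_exp_qform (-L) y s
    have hcomm : Commute (exp (s • (-L))) (-L) :=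
      (((Commute.refl (-L)).smul_left s)).exp_left
    have h2 : (exp (s • (-L)) * (-L)) *ᵥ y = -(L *ᵥ (exp (s • (-L)) *ᵥ y)) := by
      rw [hcomm.eq, ← Matrix.mulVec_mulVec, Matrix.neg_mulVec]
    rw [h2] at h1
    convert h1 using 1
    rw [neg_dotProduct]; ring
  have hanti : Antitone g := by
    apply antitone_of_deriv_nonpos (fun s => (hderiv s).differentiableAt)
    intro s
    rw [(hderiv s).deriv]
    have hnn : 0 ≤ (L *ᵥ (exp (s • (-L)) *ᵥ y)) ⬝ᵥ (exp (s • (-L)) *ᵥ y) := by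
      rw [dotProduct_comm]
      simpa using hL.dotProduct_mulVec_nonneg (exp (s • (-L)) *ᵥ y)
    nlinarith
  have := hanti ht
  have hg0 : g 0 = y ⬝ᵥ y := by
    simp [hg, NormedSpace.exp_zero, Matrix.one_mulVec]
  have hgt : g t = (exp (-(t • L)) *ᵥ y) ⬝ᵥ (exp (-(t • L)) *ᵥ y) := by
    simp only [hg, smul_neg]
  rw [← hgt, ← hg0]; exact this

/-- Strict contraction when `L y ≠ 0`, `t > 0`. -/
lemma exp_contract_dot_lt {L : Matrix ι ι ℝ} (hL : L.PosSemidef) {t : ℝ} (ht : 0 < t)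
    {y : ι → ℝ} (hy : L *ᵥ y ≠ 0) :
    (exp (-(t • L)) *ᵥ y) ⬝ᵥ (exp (-(t • L)) *ᵥ y) < y ⬝ᵥ y := by
  set g : ℝ → ℝ := fun s => (exp (s • (-L)) *ᵥ y) ⬝ᵥ (exp (s • (-L)) *ᵥ y) with hg
  have hderiv : ∀ s : ℝ, HasDerivAt g
      (-(2 * ((L *ᵥ (exp (s • (-L)) *ᵥ y)) ⬝ᵥ (exp (s • (-L)) *ᵥ y)))) s := by
    intro s
    have h1 := hasDerivAt_exp_qform (-L) y s
    have hcomm : Commute (exp (s • (-L))) (-L) :=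
      (((Commute.refl (-L)).smul_left s)).exp_left
    have h2 : (exp (s • (-L)) * (-L)) *ᵥ y = -(L *ᵥ (exp (s • (-L)) *ᵥ y)) := by
      rw [hcomm.eq, ← Matrix.mulVec_mulVec, Matrix.neg_mulVec]
    rw [h2] at h1
    convert h1 using 1
    rw [neg_dotProduct]; ring
  have hanti : StrictAnti g := by
    apply strictAnti_of_deriv_neg
    intro s
    rw [(hderiv s).deriv]
    have hz : L *ᵥ (exp (s • (-L)) *ᵥ y) = exp (s • (-L)) *ᵥ (L *ᵥ y) := by
      rw [Matrix.mulVec_mulVec, Matrix.mulVec_mulVec]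
      exact congrArg (· *ᵥ y) (((Commute.refl L).neg_left.smul_left s).exp_left).eq.symm
    have hu := Matrix.isUnit_exp (s • (-L))
    have hne : L *ᵥ (exp (s • (-L)) *ᵥ y) ≠ 0 := by
      rw [hz]
      intro h0
      apply hy
      obtain ⟨u, hu'⟩ := hu
      have : (↑u⁻¹ : Matrix ι ι ℝ) *ᵥ (exp (s • (-L)) *ᵥ (L *ᵥ y)) = L *ᵥ y := by
        rw [Matrix.mulVec_mulVec, Matrix.mulVec_mulVec, ← hu']
        rw [Units.inv_mul, Matrix.one_mul]
      rw [h0, Matrix.mulVec_zero] at this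
      exact this.symm
    have hpos : 0 < (L *ᵥ (exp (s • (-L)) *ᵥ y)) ⬝ᵥ (exp (s • (-L)) *ᵥ y) := by
      rw [dotProduct_comm]
      have hnn := hL.dotProduct_mulVec_nonneg (exp (s • (-L)) *ᵥ y)
      simp only [star_trivial] at hnn
      rcases hnn.lt_or_eq with hlt | heq
      · exact hlt
      · exfalso
        apply hne
        have := (hL.dotProduct_mulVec_zero_iff (exp (s • (-L)) *ᵥ y)).mp
        simp only [star_trivial] at this
        exact this heq.symm
    nlinarith
  have := hanti ht
  have hg0 : g 0 = y ⬝ᵥ y := by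
    simp [hg, NormedSpace.exp_zero, Matrix.one_mulVec]
  have hgt : g t = (exp (-(t • L)) *ᵥ y) ⬝ᵥ (exp (-(t • L)) *ᵥ y) := by
    simp only [hg, smul_neg]
  rw [← hgt, ← hg0]; exact this

/-- transpose of exp of a symmetric matrix. -/
lemma exp_transpose_of_symm {M : Matrix ι ι ℝ} (h : Mᵀ = M) :
    (exp M)ᵀ = exp M := by
  rw [← Matrix.exp_transpose, h]

end ExpLemmas2

open Matrix Finset Filter NormedSpace


section Lap
variable {n d : ℕ}

lemma mwLaplacian_mulVec (A : Fin n → Fin n → Matrix (Fin d) (Fin d) ℝ)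
    (x : Fin n × Fin d → ℝ) (i : Fin n) (a : Fin d) :
    (mwLaplacian A *ᵥ x) (i, a)
      = ∑ j, (A i j *ᵥ (fun b => x (i, b) - x (j, b))) a := by
  classical
  set S1 : Fin n → ℝ := fun j => ∑ b, A i j a b * x (i, b) with hS1
  set S2 : Fin n → ℝ := fun j => ∑ b, A i j a b * x (j, b) with hS2
  have hRHS : ∀ j ∈ Finset.univ, (A i j *ᵥ fun b => x (i, b) - x (j, b)) a = S1 j - S2 j := by
    intro j _
    simp only [Matrix.mulVec, dotProduct, mul_sub, hS1, hS2]
    rw [Finset.sum_sub_distrib]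
  rw [Finset.sum_congr rfl hRHS]
  have hL : (mwLaplacian A *ᵥ x) (i, a)
      = ∑ j : Fin n, ∑ b, mwLaplacian A (i, a) (j, b) * x (j, b) := by
    simp only [Matrix.mulVec, dotProduct]
    rw [Fintype.sum_prod_type]
  rw [hL]
  rw [← Finset.sum_erase_add _ _ (Finset.mem_univ i),
    ← Finset.sum_erase_add _ (fun j => S1 j - S2 j) (Finset.mem_univ i)]
  have hFi : S1 i - S2 i = 0 := by simp [hS1, hS2]
  rw [hFi, add_zero]
  have hinner_i : ∑ b, mwLaplacian A (i, a) (i, b) * x (i, b)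
      = ∑ j ∈ Finset.univ.erase i, S1 j := by
    have he : ∀ b, mwLaplacian A (i, a) (i, b) = ∑ k ∈ Finset.univ.erase i, A i k a b := by
      intro b; simp [mwLaplacian]
    simp only [he, Finset.sum_mul]
    rw [Finset.sum_comm]
  have hinner_off : ∀ j ∈ Finset.univ.erase i,
      ∑ b, mwLaplacian A (i, a) (j, b) * x (j, b) = -S2 j := by
    intro j hj
    have hij : i ≠ j := fun h => (Finset.mem_erase.mp hj).1 h.symm
    have he : ∀ b, mwLaplacian A (i, a) (j, b) = -(A i j a b) := by
      intro b; simp [mwLaplacian, hij]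
    simp only [he, hS2, neg_mul]
    rw [← Finset.sum_neg_distrib]
  rw [Finset.sum_congr rfl hinner_off, hinner_i]
  rw [Finset.sum_neg_distrib, Finset.sum_sub_distrib]
  ring

lemma mwLaplacian_consensus (A : Fin n → Fin n → Matrix (Fin d) (Fin d) ℝ)
    (v : Fin d → ℝ) :
    mwLaplacian A *ᵥ (fun p => v p.2) = 0 := by
  funext p
  obtain ⟨i, a⟩ := p
  rw [mwLaplacian_mulVec A _ i a]
  rw [show (0 : Fin n × Fin d → ℝ) (i, a) = 0 from rfl]
  apply Finset.sum_eq_zero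
  intro j _
  have h0 : (fun b => (fun p : Fin n × Fin d => v p.2) (i, b)
      - (fun p : Fin n × Fin d => v p.2) (j, b)) = (0 : Fin d → ℝ) := by
    funext b; simp
  rw [h0, Matrix.mulVec_zero]
  rfl

lemma mwLaplacian_transpose (A : Fin n → Fin n → Matrix (Fin d) (Fin d) ℝ)
    (hsym : ∀ i j, A i j = A j i) (hherm : ∀ i j, (A i j).IsHermitian) :
    (mwLaplacian A)ᵀ = mwLaplacian A := by
  have hent : ∀ i j (a b : Fin d), A i j a b = A i j b a := by
    intro i j a b
    have h := congrFun (congrFun (hherm i j) a) b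
    simp only [Matrix.conjTranspose_apply, star_trivial] at h
    exact h.symm
  funext p q
  simp only [Matrix.transpose_apply, mwLaplacian]
  rcases eq_or_ne p.1 q.1 with h | h
  · rw [if_pos h, if_pos h.symm, h]
    congr 1; funext k
    exact hent _ _ _ _
  · rw [if_neg h, if_neg (Ne.symm h)]
    rw [hsym q.1 p.1, hent]

lemma mwLaplacian_qform (A : Fin n → Fin n → Matrix (Fin d) (Fin d) ℝ)
    (hsym : ∀ i j, A i j = A j i) (x : Fin n × Fin d → ℝ) :
    2 * (x ⬝ᵥ (mwLaplacian A *ᵥ x))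
      = ∑ i, ∑ j, ((fun b => x (i,b) - x (j,b)) ⬝ᵥ (A i j *ᵥ (fun b => x (i,b) - x (j,b)))) := by
  classical
  set δ : Fin n → Fin n → Fin d → ℝ := fun i j b => x (i,b) - x (j,b) with hδ
  set T : Fin n → Fin n → ℝ := fun i j => (fun b => x (i,b)) ⬝ᵥ (A i j *ᵥ δ i j) with hT
  have hq : x ⬝ᵥ (mwLaplacian A *ᵥ x) = ∑ i, ∑ j, T i j := by
    rw [dotProduct]
    rw [Fintype.sum_prod_type]
    apply Finset.sum_congr rfl
    intro i _
    have hrow : ∀ a ∈ Finset.univ, x (i,a) * (mwLaplacian A *ᵥ x) (i,a)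
        = ∑ j, x (i,a) * (A i j *ᵥ δ i j) a := by
      intro a _
      rw [mwLaplacian_mulVec A x i a, Finset.mul_sum]
    rw [Finset.sum_congr rfl hrow, Finset.sum_comm]
    apply Finset.sum_congr rfl
    intro j _
    rfl
  have hq' : x ⬝ᵥ (mwLaplacian A *ᵥ x) = ∑ i, ∑ j, T j i := by
    rw [hq, Finset.sum_comm]
  have hTT : ∀ i j, T i j + T j i = δ i j ⬝ᵥ (A i j *ᵥ δ i j) := by
    intro i j
    have hji : δ j i = -δ i j := by funext b; simp [hδ]
    have h1 : T j i = -((fun b => x (j,b)) ⬝ᵥ (A i j *ᵥ δ i j)) := by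
      rw [hT]
      simp only
      rw [hji, hsym j i, Matrix.mulVec_neg, dotProduct_neg]
    rw [h1, hT]
    simp only
    rw [← sub_eq_add_neg, ← sub_dotProduct]
    congr 1
  calc 2 * (x ⬝ᵥ (mwLaplacian A *ᵥ x))
      = (∑ i, ∑ j, T i j) + ∑ i, ∑ j, T j i := by rw [← hq, ← hq']; ring
    _ = ∑ i, ∑ j, (T i j + T j i) := by
        rw [← Finset.sum_add_distrib]
        congr 1; funext i; rw [← Finset.sum_add_distrib]
    _ = ∑ i, ∑ j, δ i j ⬝ᵥ (A i j *ᵥ δ i j) := by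
        apply Finset.sum_congr rfl; intro i _
        apply Finset.sum_congr rfl; intro j _
        exact hTT i j

lemma mwLaplacian_posSemidef (A : Fin n → Fin n → Matrix (Fin d) (Fin d) ℝ)
    (hpsd : ∀ i j, (A i j).PosSemidef) (hsym : ∀ i j, A i j = A j i) :
    (mwLaplacian A).PosSemidef := by
  refine Matrix.PosSemidef.of_dotProduct_mulVec_nonneg ?_ ?_
  · have ht := mwLaplacian_transpose A hsym (fun i j => (hpsd i j).1)
    show (mwLaplacian A)ᴴ = mwLaplacian A
    have h2 : (mwLaplacian A)ᴴ = (mwLaplacian A)ᵀ := by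
      funext p q; simp [Matrix.conjTranspose_apply]
    rw [h2, ht]
  · intro x
    have hQ := mwLaplacian_qform A hsym x
    have hnn : 0 ≤ ∑ i, ∑ j,
        ((fun b => x (i,b) - x (j,b)) ⬝ᵥ (A i j *ᵥ (fun b => x (i,b) - x (j,b)))) := by
      apply Finset.sum_nonneg; intro i _
      apply Finset.sum_nonneg; intro j _
      simpa using (hpsd i j).dotProduct_mulVec_nonneg (fun b => x (i,b) - x (j,b))
    simp only [star_trivial]
    nlinarith [hQ, hnn]

lemma mwLaplacian_sum_smul (m : ℕ) (Δt : ℕ → ℝ)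
    (A : ℕ → Fin n → Fin n → Matrix (Fin d) (Fin d) ℝ) :
    mwLaplacian (fun i j => ∑ k ∈ Finset.range m, Δt k • A k i j)
      = ∑ k ∈ Finset.range m, Δt k • mwLaplacian (A k) := by
  funext p q
  simp only [mwLaplacian, Matrix.sum_apply, Matrix.smul_apply, smul_eq_mul]
  split_ifs with h
  · rw [Finset.sum_comm]
    apply Finset.sum_congr rfl; intro k _
    rw [Finset.mul_sum]
  · simp only [mul_neg]
    rw [← Finset.sum_neg_distrib]

end Lap



section StateSeq
variable {ι : Type*} [Fintype ι] [DecidableEq ι] (E : ℕ → Matrix ι ι ℝ)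

lemma stateSeq_add (x y : ι → ℝ) : ∀ k, stateSeq E (x + y) k = stateSeq E x k + stateSeq E y k
  | 0 => rfl
  | k + 1 => by
    simp only [stateSeq, stateSeq_add x y k, Matrix.mulVec_add]

lemma stateSeq_smul (c : ℝ) (x : ι → ℝ) : ∀ k, stateSeq E (c • x) k = c • stateSeq E x k
  | 0 => rfl
  | k + 1 => by
    simp only [stateSeq, stateSeq_smul c x k, Matrix.mulVec_smul]

lemma stateSeq_zero : ∀ k, stateSeq E (0 : ι → ℝ) k = 0
  | 0 => rfl
  | k + 1 => by simp only [stateSeq, stateSeq_zero k, Matrix.mulVec_zero]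

lemma stateSeq_add_index (x : ι → ℝ) (a : ℕ) :
    ∀ b, stateSeq E x (a + b) = stateSeq (fun k => E (a + k)) (stateSeq E x a) b
  | 0 => rfl
  | b + 1 => by
    show stateSeq E x (a + b + 1) = _
    simp only [stateSeq, stateSeq_add_index x a b]

lemma stateSeq_continuous (k : ℕ) : Continuous (fun x : ι → ℝ => stateSeq E x k) := by
  induction k with
  | zero => exact continuous_id
  | succ k ih =>
    show Continuous (fun x : ι → ℝ => (E k) *ᵥ stateSeq E x k)
    have hmv : Continuous (fun v : ι → ℝ => (E k) *ᵥ v) := by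
      apply continuous_pi
      intro p
      simp only [Matrix.mulVec, dotProduct]
      exact continuous_finset_sum _ fun q _ => continuous_const.mul (continuous_apply q)
    exact hmv.comp ih

end StateSeq

section Helpers
variable {ι κ : Type*} [Fintype ι]

lemma sum_mulVec' (s : Finset κ) (f : κ → Matrix ι ι ℝ) (v : ι → ℝ) :
    (∑ k ∈ s, f k) *ᵥ v = ∑ k ∈ s, f k *ᵥ v := by
  classical
  induction s using Finset.induction_on with
  | empty => simp [Matrix.zero_mulVec]
  | insert _ _ ha ih => rw [Finset.sum_insert ha, Finset.sum_insert ha, Matrix.add_mulVec, ih]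

lemma dotProduct_sum' (s : Finset κ) (v : ι → ℝ) (f : κ → ι → ℝ) :
    v ⬝ᵥ (∑ k ∈ s, f k) = ∑ k ∈ s, v ⬝ᵥ f k := by
  classical
  induction s using Finset.induction_on with
  | empty => simp
  | insert _ _ ha ih => rw [Finset.sum_insert ha, Finset.sum_insert ha, dotProduct_add, ih]

end Helpers


set_option maxHeartbeats 1600000 in
/-- For a periodic switched matrix-weighted network with adjacency
data `A^k = A^{k mod m}` (edge weights symmetric PSD, `A^k_ij = A^k_ji`,
`A^k_ii = 0`), Laplacians `L^k`, and dwell times `Δt k = Δt (k mod m) > 0`: if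
the integral graph over one period has a positive spanning tree — i.e. the simple
graph whose edges are the pairs `(i,j)` with `∑_{k=0}^{m-1} Δt_k A^k_ij` positive
definite is connected — then every initial state converges to its average
consensus value. -/
theorem periodic_positive_spanning_tree_average_consensus
    {n d m : ℕ} (hn : 2 ≤ n) (hd : 1 ≤ d) (hm : 1 ≤ m)
    (A : ℕ → Fin n → Fin n → Matrix (Fin d) (Fin d) ℝ) (Δt : ℕ → ℝ)
    (hAper : ∀ k, A k = A (k % m)) (hΔper : ∀ k, Δt k = Δt (k % m))
    (hΔ : ∀ k, 0 < Δt k)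
    (hpsd : ∀ k i j, (A k i j).PosSemidef)
    (hsym : ∀ k i j, A k i j = A k j i)
    (hdiag : ∀ k i, A k i i = 0)
    (htree : (SimpleGraph.fromRel (fun i j : Fin n =>
        (∑ k ∈ Finset.range m, Δt k • A k i j).PosDef)).Connected) :
    ∀ x0 : Fin n × Fin d → ℝ,
      Tendsto
        (stateSeq (fun k => NormedSpace.exp (-(Δt k • mwLaplacian (A k)))) x0)
        atTop (nhds (fun p => (n : ℝ)⁻¹ * ∑ i : Fin n, x0 (i, p.2))) := by
  classical
  intro x0
  have hn0 : 0 < n := by omega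
  have hnR : (0 : ℝ) < n := by exact_mod_cast hn0
  set E : ℕ → Matrix (Fin n × Fin d) (Fin n × Fin d) ℝ :=
    fun k => NormedSpace.exp (-(Δt k • mwLaplacian (A k))) with hEdef
  set L : ℕ → Matrix (Fin n × Fin d) (Fin n × Fin d) ℝ :=
    fun k => mwLaplacian (A k) with hLdef
  have hLpsd : ∀ k, (L k).PosSemidef := fun k =>
    mwLaplacian_posSemidef (A k) (hpsd k) (hsym k)
  have hLtrans : ∀ k, (L k)ᵀ = L k := fun k =>
    mwLaplacian_transpose (A k) (hsym k) (fun i j => (hpsd k i j).1)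
  have step_le : ∀ k (y : Fin n × Fin d → ℝ),
      (E k *ᵥ y) ⬝ᵥ (E k *ᵥ y) ≤ y ⬝ᵥ y := fun k y =>
    exp_contract_dot_le (hLpsd k) (hΔ k).le y
  have hconsfix : ∀ k (v : Fin d → ℝ),
      E k *ᵥ (fun p : Fin n × Fin d => v p.2) = (fun p : Fin n × Fin d => v p.2) := by
    intro k v
    apply exp_mulVec_of_kernel
    rw [Matrix.neg_mulVec, Matrix.smul_mulVec, mwLaplacian_consensus (A k) v]
    simp
  set u : Fin d → (Fin n × Fin d → ℝ) := fun e p => if p.2 = e then 1 else 0 with hudef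
  have hufix : ∀ k e, E k *ᵥ u e = u e := fun k e =>
    hconsfix k (fun b => if b = e then 1 else 0)
  have hEsymm : ∀ k, (E k)ᵀ = E k := by
    intro k
    apply exp_transpose_of_symm
    rw [Matrix.transpose_neg, Matrix.transpose_smul, hLtrans]
  have hupres : ∀ k e (w : Fin n × Fin d → ℝ), u e ⬝ᵥ (E k *ᵥ w) = u e ⬝ᵥ w := by
    intro k e w
    rw [Matrix.dotProduct_mulVec]
    congr 1
    rw [← Matrix.mulVec_transpose, hEsymm, hufix]
  set Wmem : (Fin n × Fin d → ℝ) → Prop := fun w => ∀ e, u e ⬝ᵥ w = 0 with hWdef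
  have hWpres : ∀ k w, Wmem w → Wmem (E k *ᵥ w) := fun k w hw e => by
    rw [hupres k e w]; exact hw e
  have hWseq : ∀ w, Wmem w → ∀ j, Wmem (stateSeq E w j) := by
    intro w hw j
    induction j with
    | zero => exact hw
    | succ j ih => exact hWpres j _ ih
  have hudot : ∀ e (w : Fin n × Fin d → ℝ), u e ⬝ᵥ w = ∑ i, w (i, e) := by
    intro e w
    rw [dotProduct, Fintype.sum_prod_type]
    apply Finset.sum_congr rfl
    intro i _
    calc ∑ b, u e (i, b) * w (i, b) = ∑ b, (if b = e then w (i, b) else 0) := by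
          apply Finset.sum_congr rfl
          intro b _
          by_cases h : b = e <;> simp [hudef, h]
      _ = w (i, e) := by simp
  have hWcons : ∀ (w : Fin n × Fin d → ℝ) (v : Fin d → ℝ),
      Wmem w → (∀ p, w p = v p.2) → w = 0 := by
    intro w v hw hv
    funext p
    have h := hw p.2
    rw [hudot] at h
    have hsum : ∑ i : Fin n, w (i, p.2) = ∑ _i : Fin n, v p.2 :=
      Finset.sum_congr rfl fun i _ => hv (i, p.2)
    rw [hsum, Finset.sum_const, Finset.card_univ, Fintype.card_fin, nsmul_eq_mul] at h
    have hv0 : v p.2 = 0 := by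
      rcases mul_eq_zero.mp h with h' | h'
      · exact absurd h' (ne_of_gt hnR)
      · exact h'
    rw [hv p, hv0]
    rfl
  -- total weight matrices
  set B : Fin n → Fin n → Matrix (Fin d) (Fin d) ℝ :=
    fun i j => ∑ k ∈ Finset.range m, Δt k • A k i j with hBdef
  have hBsym : ∀ i j, B i j = B j i := by
    intro i j
    apply Finset.sum_congr rfl
    intro k _
    rw [hsym]
  have hBpsd : ∀ i j, (B i j).PosSemidef := by
    intro i j
    refine Matrix.PosSemidef.of_dotProduct_mulVec_nonneg ?_ ?_
    · show (B i j)ᴴ = B i j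
      rw [hBdef]
      simp only [Matrix.conjTranspose_sum]
      apply Finset.sum_congr rfl
      intro k _
      rw [Matrix.conjTranspose_smul, (hpsd k i j).1, star_trivial]
    · intro x
      rw [hBdef]
      simp only
      rw [sum_mulVec', dotProduct_sum']
      apply Finset.sum_nonneg
      intro k _
      rw [Matrix.smul_mulVec, dotProduct_smul, smul_eq_mul]
      have := (hpsd k i j).dotProduct_mulVec_nonneg x
      exact mul_nonneg (hΔ k).le this
  have hkernel : ∀ w, Wmem w → (∀ k < m, L k *ᵥ w = 0) → w = 0 := by
    intro w hw hker
    have hBL : mwLaplacian B = ∑ k ∈ Finset.range m, Δt k • L k :=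
      mwLaplacian_sum_smul m Δt A
    have hLw : mwLaplacian B *ᵥ w = 0 := by
      rw [hBL, sum_mulVec']
      apply Finset.sum_eq_zero
      intro k hk
      rw [Matrix.smul_mulVec, hker k (Finset.mem_range.mp hk), smul_zero]
    have hQ := mwLaplacian_qform B hBsym w
    rw [hLw, dotProduct_zero, mul_zero] at hQ
    have hnn : ∀ i j, (0:ℝ) ≤ ((fun b => w (i,b) - w (j,b)) ⬝ᵥ (B i j *ᵥ (fun b => w (i,b) - w (j,b)))) := by
      intro i j
      have := (hBpsd i j).dotProduct_mulVec_nonneg (fun b => w (i,b) - w (j,b))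
      simpa using this
    have hrows := (Finset.sum_eq_zero_iff_of_nonneg
      (fun i _ => Finset.sum_nonneg fun j _ => hnn i j)).mp hQ.symm
    have hterm : ∀ i j, ((fun b => w (i,b) - w (j,b)) ⬝ᵥ (B i j *ᵥ (fun b => w (i,b) - w (j,b)))) = 0 := by
      intro i j
      have := (Finset.sum_eq_zero_iff_of_nonneg (fun j _ => hnn i j)).mp
        (hrows i (Finset.mem_univ i)) j (Finset.mem_univ j)
      exact this
    have hblk : ∀ i j, (B i j).PosDef → (fun b => w (i,b)) = (fun b => w (j,b)) := by
      intro i j hPD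
      by_contra hne
      have hδne : (fun b => w (i,b) - w (j,b)) ≠ 0 := by
        intro h0
        apply hne
        funext b
        have hb := congrFun h0 b
        simpa [sub_eq_zero] using hb
      have hpos := hPD.dotProduct_mulVec_pos hδne
      simp only [star_trivial] at hpos
      rw [hterm i j] at hpos
      exact lt_irrefl 0 hpos
    have hreach : ∀ i j : Fin n,
        (SimpleGraph.fromRel (fun i j => (B i j).PosDef)).Reachable i j →
        (fun b => w (i,b)) = (fun b => w (j,b)) := by
      intro i j hr
      obtain ⟨p⟩ := hr
      induction p with
      | nil => rfl
      | @cons a b c h p ih =>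
        obtain ⟨hne, h'⟩ := (SimpleGraph.fromRel_adj _ _ _).mp h
        rcases h' with h' | h'
        · exact (hblk _ _ h').trans ih
        · exact ((hblk _ _ h').symm).trans ih
    have hcons : ∀ p : Fin n × Fin d, w p = (fun b => w (⟨0, hn0⟩, b)) p.2 := by
      intro p
      have h1 := hreach p.1 ⟨0, hn0⟩ (htree.preconnected p.1 ⟨0, hn0⟩)
      exact congrFun h1 p.2
    exact hWcons w (fun b => w (⟨0, hn0⟩, b)) hw hcons
  -- monotonicity of the norm along trajectories (with shifted switching signals)
  have hmonoa : ∀ (a : ℕ) (y : Fin n × Fin d → ℝ) (j : ℕ),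
      euclNorm (stateSeq (fun k => E (a + k)) y j) ≤ euclNorm y := by
    intro a y j
    induction j with
    | zero => exact le_refl _
    | succ j ih =>
      refine le_trans ?_ ih
      exact euclNorm_le_of_dot_le (step_le (a + j) _)
  have hmono0 : ∀ (y : Fin n × Fin d → ℝ) (j : ℕ),
      euclNorm (stateSeq E y j) ≤ euclNorm y := by
    intro y j
    induction j with
    | zero => exact le_refl _
    | succ j ih =>
      refine le_trans ?_ ih
      exact euclNorm_le_of_dot_le (step_le j _)
  -- strict contraction over one period
  have period_lt : ∀ w, Wmem w → w ≠ 0 → euclNorm (stateSeq E w m) < euclNorm w := by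
    intro w hw hwne
    have hex : ∃ k0, k0 < m ∧ L k0 *ᵥ (stateSeq E w k0) ≠ 0 := by
      by_contra h
      push_neg at h
      have hfix : ∀ j, j ≤ m → stateSeq E w j = w := by
        intro j
        induction j with
        | zero => intro _; rfl
        | succ j ih =>
          intro hj
          have hj' : j ≤ m := Nat.le_of_succ_le hj
          have hjlt : j < m := hj
          show E j *ᵥ stateSeq E w j = w
          rw [ih hj']
          apply exp_mulVec_of_kernel
          have hk := h j hjlt
          rw [ih hj'] at hk
          rw [Matrix.neg_mulVec, Matrix.smul_mulVec, hk]
          simp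
      have hker : ∀ k < m, L k *ᵥ w = 0 := by
        intro k hk
        have h2 := h k hk
        rwa [hfix k (le_of_lt hk)] at h2
      exact hwne (hkernel w hw hker)
    obtain ⟨k0, hk0m, hk0⟩ := hex
    have hstrict : euclNorm (stateSeq E w (k0+1)) < euclNorm (stateSeq E w k0) := by
      apply euclNorm_lt_of_dot_lt
      exact exp_contract_dot_lt (hLpsd k0) (hΔ k0) hk0
    have hm' : k0 + 1 + (m - (k0+1)) = m := by omega
    calc euclNorm (stateSeq E w m)
        = euclNorm (stateSeq (fun k => E (k0+1+k)) (stateSeq E w (k0+1)) (m - (k0+1))) := by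
          rw [← stateSeq_add_index, hm']
      _ ≤ euclNorm (stateSeq E w (k0+1)) := hmonoa (k0+1) _ _
      _ < euclNorm (stateSeq E w k0) := hstrict
      _ ≤ euclNorm w := hmono0 w k0
  -- continuity of the norm
  have hNcont : Continuous (euclNorm : (Fin n × Fin d → ℝ) → ℝ) := by
    have hdc : Continuous (fun x : Fin n × Fin d → ℝ => x ⬝ᵥ x) := by
      simp only [dotProduct]
      exact continuous_finset_sum _ fun q _ => (continuous_apply q).mul (continuous_apply q)
    exact Real.continuous_sqrt.comp hdc
  -- the compact set S and the contraction factor ρ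
  set S : Set (Fin n × Fin d → ℝ) := {w | Wmem w ∧ euclNorm w = 1} with hSdef
  have hSsub : S ⊆ Metric.closedBall 0 1 := by
    intro w hw
    rw [Metric.mem_closedBall, dist_zero_right]
    apply (pi_norm_le_iff_of_nonneg zero_le_one).mpr
    intro p
    rw [Real.norm_eq_abs]
    calc |w p| ≤ euclNorm w := abs_apply_le_euclNorm w p
      _ = 1 := hw.2
  have hSclosed : IsClosed S := by
    have h1 : IsClosed {w : Fin n × Fin d → ℝ | Wmem w} := by
      have heq : {w : Fin n × Fin d → ℝ | Wmem w} = ⋂ e, {w | u e ⬝ᵥ w = 0} := by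
        ext w
        simp [hWdef, Set.mem_iInter]
      rw [heq]
      apply isClosed_iInter
      intro e
      apply isClosed_eq ?_ continuous_const
      show Continuous fun w : Fin n × Fin d → ℝ => u e ⬝ᵥ w
      simp only [dotProduct]
      exact continuous_finset_sum _ fun q _ => continuous_const.mul (continuous_apply q)
    have h2 : IsClosed {w : Fin n × Fin d → ℝ | euclNorm w = 1} :=
      isClosed_eq hNcont continuous_const
    rw [hSdef, Set.setOf_and]
    exact h1.inter h2
  have hScompact : IsCompact S :=
    (isCompact_closedBall (0 : Fin n × Fin d → ℝ) 1).of_isClosed_subset hSclosed hSsub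
  have hSne : S.Nonempty := by
    set i0 : Fin n := ⟨0, by omega⟩ with hi0
    set i1 : Fin n := ⟨1, by omega⟩ with hi1
    have h01 : i0 ≠ i1 := by
      intro h
      have := congrArg Fin.val h
      simp [hi0, hi1] at this
    set w1 : Fin n × Fin d → ℝ :=
      fun p => (if p.1 = i0 then (1:ℝ) else 0) + (if p.1 = i1 then (-1:ℝ) else 0) with hw1
    have hW1 : Wmem w1 := by
      intro e
      rw [hudot]
      simp only [hw1]
      rw [Finset.sum_add_distrib]
      simp [Finset.sum_ite_eq']
    have hw1ne : w1 ≠ 0 := by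
      intro h0
      have h1 := congrFun h0 (i0, ⟨0, hd⟩)
      simp [hw1, h01] at h1
    have hNw1 : 0 < euclNorm w1 :=
      lt_of_le_of_ne (euclNorm_nonneg _) (fun h => hw1ne (euclNorm_eq_zero_iff.mp h.symm))
    refine ⟨(euclNorm w1)⁻¹ • w1, ⟨?_, ?_⟩⟩
    · intro e
      rw [dotProduct_smul, hW1 e, smul_zero]
    · rw [euclNorm_smul, abs_of_nonneg (inv_nonneg.mpr hNw1.le),
        inv_mul_cancel₀ (ne_of_gt hNw1)]
  obtain ⟨z, hzS, hzmax⟩ := hScompact.exists_isMaxOn hSne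
    (f := fun w => euclNorm (stateSeq E w m))
    (by exact (hNcont.comp (stateSeq_continuous E m)).continuousOn)
  set ρ : ℝ := euclNorm (stateSeq E z m) with hρdef
  have hρ0 : 0 ≤ ρ := euclNorm_nonneg _
  have hzne : z ≠ 0 := by
    intro h
    have h2 := hzS.2
    rw [h, euclNorm_zero] at h2
    exact zero_ne_one h2
  have hρlt : ρ < 1 := by
    have h2 := period_lt z hzS.1 hzne
    rwa [hzS.2] at h2
  have hbound : ∀ w, Wmem w → euclNorm (stateSeq E w m) ≤ ρ * euclNorm w := by
    intro w hw
    rcases eq_or_ne w 0 with rfl | hwne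
    · rw [stateSeq_zero, euclNorm_zero, mul_zero]
    · have hNw : 0 < euclNorm w :=
        lt_of_le_of_ne (euclNorm_nonneg _) (fun h => hwne (euclNorm_eq_zero_iff.mp h.symm))
      have hwnormS : (euclNorm w)⁻¹ • w ∈ S := by
        refine ⟨fun e => by rw [dotProduct_smul, hw e, smul_zero], ?_⟩
        rw [euclNorm_smul, abs_of_nonneg (inv_nonneg.mpr hNw.le),
          inv_mul_cancel₀ (ne_of_gt hNw)]
      have hmax : euclNorm (stateSeq E ((euclNorm w)⁻¹ • w) m) ≤ ρ := hzmax hwnormS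
      rw [stateSeq_smul, euclNorm_smul, abs_of_nonneg (inv_nonneg.mpr hNw.le)] at hmax
      calc euclNorm (stateSeq E w m)
          = euclNorm w * ((euclNorm w)⁻¹ * euclNorm (stateSeq E w m)) := by
            field_simp
        _ ≤ euclNorm w * ρ := mul_le_mul_of_nonneg_left hmax hNw.le
        _ = ρ * euclNorm w := mul_comm _ _
  -- periodicity
  have hEper : ∀ q k, E (q * m + k) = E k := by
    intro q k
    have hmod : (q * m + k) % m = k % m := by
      rw [Nat.add_comm]
      exact Nat.add_mul_mod_self_right k q m
    have hA : A (q * m + k) = A k := by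
      rw [hAper (q*m+k), hAper k, hmod]
    have hΔ' : Δt (q * m + k) = Δt k := by
      rw [hΔper (q*m+k), hΔper k, hmod]
    rw [hEdef]
    simp only
    rw [hA, hΔ']
  -- decomposition x_k = w_k + c
  set c : Fin n × Fin d → ℝ := fun p => (n:ℝ)⁻¹ * ∑ i, x0 (i, p.2) with hcdef
  have hEc : ∀ k, E k *ᵥ c = c := by
    intro k
    rw [hcdef]
    exact hconsfix k (fun e => (n:ℝ)⁻¹ * ∑ i, x0 (i, e))
  have hxdecomp : ∀ k, stateSeq E x0 k = stateSeq E (x0 - c) k + c := by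
    intro k
    induction k with
    | zero =>
      show x0 = x0 - c + c
      rw [sub_add_cancel]
    | succ k ih =>
      show E k *ᵥ stateSeq E x0 k = _
      rw [ih, Matrix.mulVec_add, hEc]
      rfl
  set w : ℕ → Fin n × Fin d → ℝ := fun j => stateSeq E (x0 - c) j with hwdef
  have hw0 : Wmem (x0 - c) := by
    intro e
    rw [hudot]
    simp only [Pi.sub_apply]
    rw [Finset.sum_sub_distrib]
    rw [hcdef]
    simp only
    rw [Finset.sum_const, Finset.card_univ, Fintype.card_fin, nsmul_eq_mul]
    field_simp
    ring
  have hwW : ∀ j, Wmem (w j) := hWseq _ hw0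
  have hshift : ∀ q j, w (q * m + j) = stateSeq E (w (q * m)) j := by
    intro q j
    rw [hwdef]
    simp only
    have hEfun : (fun k => E (q * m + k)) = E := funext fun k => hEper q k
    rw [stateSeq_add_index, hEfun]
  have hperiod : ∀ q, euclNorm (w (q * m)) ≤ ρ ^ q * euclNorm (w 0) := by
    intro q
    induction q with
    | zero => simp
    | succ q ih =>
      have h1 : w ((q+1) * m) = stateSeq E (w (q*m)) m := by
        rw [← hshift q m]
        congr 1
        ring
      rw [h1]
      calc euclNorm (stateSeq E (w (q*m)) m)
          ≤ ρ * euclNorm (w (q*m)) := hbound _ (hwW _)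
        _ ≤ ρ * (ρ^q * euclNorm (w 0)) := mul_le_mul_of_nonneg_left ih hρ0
        _ = ρ^(q+1) * euclNorm (w 0) := by ring
  have hgen : ∀ k, euclNorm (w k) ≤ ρ^(k / m) * euclNorm (w 0) := by
    intro k
    have hk : (k / m) * m + k % m = k := by
      rw [mul_comm]
      exact Nat.div_add_mod k m
    calc euclNorm (w k)
        = euclNorm (stateSeq E (w ((k/m)*m)) (k % m)) := by rw [← hshift, hk]
      _ ≤ euclNorm (w ((k/m)*m)) := hmono0 _ _
      _ ≤ ρ^(k/m) * euclNorm (w 0) := hperiod _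
  -- conclude
  rw [tendsto_pi_nhds]
  intro p
  have hxp : ∀ k, stateSeq E x0 k p = w k p + c p := by
    intro k
    rw [hxdecomp k]
    rfl
  have hwp : Tendsto (fun k => w k p) atTop (nhds 0) := by
    apply squeeze_zero_norm (a := fun k => ρ^(k/m) * euclNorm (w 0))
    · intro k
      rw [Real.norm_eq_abs]
      exact le_trans (abs_apply_le_euclNorm (w k) p) (hgen k)
    · have hdiv : Tendsto (fun k : ℕ => k / m) atTop atTop := by
        apply Filter.tendsto_atTop_atTop.mpr
        intro b
        refine ⟨b * m, fun k hk => ?_⟩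
        exact (Nat.le_div_iff_mul_le (by omega)).mpr hk
      have hpow : Tendsto (fun q : ℕ => ρ^q) atTop (nhds 0) :=
        tendsto_pow_atTop_nhds_zero_of_lt_one hρ0 hρlt
      have h3 := (hpow.comp hdiv).mul_const (euclNorm (w 0))
      simpa using h3
  have hfin := hwp.add_const (c p)
  rw [zero_add] at hfin
  show Tendsto (fun k => stateSeq E x0 k p) atTop (nhds (c p))
  simp only [hxp]
  exact hfin
end
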